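/- In the right-angled Coxeter group W(Γ) with a fixed linear order on the vertices, let C' be a clique and x' an element of type C'. Then the children of x' (elements x with x = x'·x_i for some vertex i, l(x) = l(x')+1, and max τ(x) = i) are in bijection with the branches of C': for each clique C with C \ C' = {i}, C equal to the maximal clique of C' ∪ {i} containing i, and i > j for all j ∈ C, there is exactly one child of type C, and there are no other children. -/

import Mathlib

open scoped Classical

variable {V : Type*} {M : Type*} {G : Type*}

noncomputable def mlen [Monoid M] (f : V → M) (x : M) : ℕ :=
  sInf {n | ∃ w : List V, (w.map f).prod = x ∧ w.length = n}

def mtype [Monoid M] (f : V → M) (x : M) : Set V :=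
  {i | ∃ w : List V, (w.map f).prod = x ∧ w.length = mlen f x ∧ w.getLast? = some i}

def geval [Group G] (f : V → G) : V × Bool → G := fun l => if l.2 then f l.1 else (f l.1)⁻¹

noncomputable def glen [Group G] (f : V → G) (x : G) : ℕ :=
  sInf {n | ∃ w : List (V × Bool), (w.map (geval f)).prod = x ∧ w.length = n}

def gtype [Group G] (f : V → G) (x : G) : Set V :=
  {i | ∃ w : List (V × Bool), (w.map (geval f)).prod = x ∧ w.length = glen f x ∧
    w.getLast?.map Prod.fst = some i}

def graphMonoidRel (Γ : SimpleGraph V) : FreeMonoid V → FreeMonoid V → Prop :=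
  fun a b => ∃ i j, Γ.Adj i j ∧ a = FreeMonoid.of i * FreeMonoid.of j ∧
    b = FreeMonoid.of j * FreeMonoid.of i

abbrev GraphMonoid (Γ : SimpleGraph V) := (conGen (graphMonoidRel Γ)).Quotient

def GraphMonoid.gen (Γ : SimpleGraph V) (i : V) : GraphMonoid Γ :=
  (conGen (graphMonoidRel Γ)).mk' (FreeMonoid.of i)

def raagRels (Γ : SimpleGraph V) : Set (FreeGroup V) :=
  {r | ∃ i j, Γ.Adj i j ∧
    r = FreeGroup.of i * FreeGroup.of j * (FreeGroup.of i)⁻¹ * (FreeGroup.of j)⁻¹}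

abbrev RAAG (Γ : SimpleGraph V) := PresentedGroup (raagRels Γ)

def RAAG.gen (Γ : SimpleGraph V) (i : V) : RAAG Γ := PresentedGroup.of i

def racgRels (Γ : SimpleGraph V) : Set (FreeGroup V) :=
  raagRels Γ ∪ {r | ∃ i, r = FreeGroup.of i * FreeGroup.of i}

abbrev RACG (Γ : SimpleGraph V) := PresentedGroup (racgRels Γ)

def RACG.gen (Γ : SimpleGraph V) (i : V) : RACG Γ := PresentedGroup.of i

noncomputable def cliquePoly [Fintype V] (Γ : SimpleGraph V) : Polynomial ℚ :=
  ∑ k ∈ Finset.range (Fintype.card V + 1), ((Γ.cliqueFinset k).card : ℚ) • Polynomial.X ^ k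

def Branch [LinearOrder V] (Γ : SimpleGraph V) (C' C : Set V) : Prop :=
  ∃ i, i ∉ C' ∧ C = insert i {j ∈ C' | Γ.Adj i j} ∧ ∀ j ∈ C, j ≠ i → j < i

def WeakBranch (Γ : SimpleGraph V) (C' C : Set V) : Prop :=
  ∃ i, i ∉ C' ∧ C = insert i {j ∈ C' | Γ.Adj i j}

noncomputable def WeakBranchF (Γ : SimpleGraph V) (C' C : Finset V) : Prop :=
  ∃ i, i ∉ C' ∧ C = insert i (C'.filter (Γ.Adj i))

noncomputable def linkF [Fintype V] (Γ : SimpleGraph V) (C : Finset V) : Finset V :=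
  Finset.univ.filter fun x => x ∉ C ∧ ∀ c ∈ C, Γ.Adj x c

def LinkRegular [Fintype V] (Γ : SimpleGraph V) : Prop :=
  ∀ C₁ C₂ : Finset V, Γ.IsClique (C₁ : Set V) → Γ.IsClique (C₂ : Set V) →
    C₁.card = C₂.card → (linkF Γ C₁).card = (linkF Γ C₂).card

-- helper: relations are 1 in a presented group
theorem PresentedGroup.mk_rel_one {α : Type*} {rels : Set (FreeGroup α)} {r : FreeGroup α}
    (h : r ∈ rels) : PresentedGroup.mk rels r = 1 := by
  have : PresentedGroup.mk rels r = QuotientGroup.mk r := rfl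
  rw [this]; show (QuotientGroup.mk r : FreeGroup α ⧸ Subgroup.normalClosure rels) = 1
  rw [QuotientGroup.eq_one_iff]
  exact Subgroup.subset_normalClosure h

variable (Γ : SimpleGraph V)

theorem RACG.gen_mul_self (i : V) : RACG.gen Γ i * RACG.gen Γ i = 1 := by
  have : RACG.gen Γ i * RACG.gen Γ i =
      PresentedGroup.mk (racgRels Γ) (FreeGroup.of i * FreeGroup.of i) := by
    simp [RACG.gen, PresentedGroup.of, map_mul]
  rw [this]
  exact PresentedGroup.mk_rel_one (Or.inr ⟨i, rfl⟩)

theorem RACG.gen_comm {i j : V} (h : Γ.Adj i j) :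
    RACG.gen Γ i * RACG.gen Γ j = RACG.gen Γ j * RACG.gen Γ i := by
  have : RACG.gen Γ i * RACG.gen Γ j * (RACG.gen Γ i)⁻¹ * (RACG.gen Γ j)⁻¹ =
      PresentedGroup.mk (racgRels Γ)
        (FreeGroup.of i * FreeGroup.of j * (FreeGroup.of i)⁻¹ * (FreeGroup.of j)⁻¹) := by
    simp [RACG.gen, PresentedGroup.of, map_mul]
  have h1 := PresentedGroup.mk_rel_one (rels := racgRels Γ) (Or.inl ⟨i, j, h, rfl⟩)
  rw [← this] at h1
  rw [mul_inv_eq_one, mul_inv_eq_iff_eq_mul] at h1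
  exact h1

noncomputable def racgMatrix : CoxeterMatrix V where
  M := Matrix.of fun i j => if i = j then 1 else if Γ.Adj i j then 2 else 0
  isSymm := by
    ext i j
    simp only [Matrix.transpose_apply, Matrix.of_apply]
    by_cases h : i = j
    · simp [h]
    · simp [h, Ne.symm h, Γ.adj_comm]
  diagonal := by intro i; simp
  off_diagonal := by
    intro i j h
    simp only [Matrix.of_apply, if_neg h]
    split <;> omega

theorem racgMatrix_adj {i j : V} (h : Γ.Adj i j) : (racgMatrix Γ) i j = 2 := by
  have hne : i ≠ j := Γ.ne_of_adj h
  simp [racgMatrix, Matrix.of_apply, hne, h]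

noncomputable def racgToCox : RACG Γ →* (racgMatrix Γ).Group :=
  PresentedGroup.toGroup (f := CoxeterMatrix.simple (racgMatrix Γ)) (by
    intro r hr
    have hsq : ∀ k, (racgMatrix Γ).simple k * (racgMatrix Γ).simple k = 1 := by
      intro k
      have := (CoxeterMatrix.toCoxeterSystem (racgMatrix Γ)).simple_mul_simple_self k
      rwa [CoxeterMatrix.toCoxeterSystem_simple] at this
    rcases hr with ⟨i, j, hadj, rfl⟩ | ⟨i, rfl⟩
    · set M := racgMatrix Γ with hM
      simp only [map_mul, map_inv, FreeGroup.lift_apply_of]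
      have h2 : (M.simple i * M.simple j) ^ (M i j) = 1 := by
        have := (CoxeterMatrix.toCoxeterSystem M).simple_mul_simple_pow i j
        rwa [CoxeterMatrix.toCoxeterSystem_simple] at this
      rw [racgMatrix_adj Γ hadj, pow_two] at h2
      have hinv : ∀ k, (M.simple k)⁻¹ = M.simple k := by
        intro k
        rw [inv_eq_iff_mul_eq_one]
        exact hsq k
      have hcomm : M.simple i * M.simple j = M.simple j * M.simple i := by
        have h3 : M.simple i * M.simple j = (M.simple i * M.simple j)⁻¹ :=
          eq_inv_of_mul_eq_one_left h2
        rw [mul_inv_rev, hinv i, hinv j] at h3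
        exact h3
      rw [hcomm]; group
    · simp only [map_mul, FreeGroup.lift_apply_of]
      exact hsq i)

noncomputable def coxToRacg : (racgMatrix Γ).Group →* RACG Γ :=
  PresentedGroup.toGroup (f := RACG.gen Γ) (by
    intro r hr
    rcases hr with ⟨⟨i, j⟩, rfl⟩
    simp only [Function.uncurry, CoxeterMatrix.relation, map_pow, map_mul, FreeGroup.lift_apply_of]
    by_cases hij : i = j
    · subst hij
      simp [racgMatrix, Matrix.of_apply, RACG.gen_mul_self]
    · by_cases hadj : Γ.Adj i j
      · rw [racgMatrix_adj Γ hadj]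
        rw [pow_two]
        calc RACG.gen Γ i * RACG.gen Γ j * (RACG.gen Γ i * RACG.gen Γ j)
            = RACG.gen Γ i * (RACG.gen Γ j * RACG.gen Γ i) * RACG.gen Γ j := by group
          _ = RACG.gen Γ i * (RACG.gen Γ i * RACG.gen Γ j) * RACG.gen Γ j := by
              rw [RACG.gen_comm Γ hadj]
          _ = (RACG.gen Γ i * RACG.gen Γ i) * (RACG.gen Γ j * RACG.gen Γ j) := by group
          _ = 1 := by rw [RACG.gen_mul_self, RACG.gen_mul_self, one_mul]
      · have : (racgMatrix Γ) i j = 0 := by simp [racgMatrix, Matrix.of_apply, hij, hadj]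
        rw [this, pow_zero])

@[simp] theorem racgToCox_gen (i : V) : racgToCox Γ (RACG.gen Γ i) = (racgMatrix Γ).simple i :=
  PresentedGroup.toGroup.of _

@[simp] theorem coxToRacg_simple (i : V) : coxToRacg Γ ((racgMatrix Γ).simple i) = RACG.gen Γ i :=
  PresentedGroup.toGroup.of _

noncomputable def racgCoxEquiv : RACG Γ ≃* (racgMatrix Γ).Group :=
  MonoidHom.toMulEquiv (racgToCox Γ) (coxToRacg Γ)
    (by
      apply PresentedGroup.ext
      intro x
      simp only [MonoidHom.comp_apply, MonoidHom.id_apply]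
      show coxToRacg Γ (racgToCox Γ (RACG.gen Γ x)) = RACG.gen Γ x
      rw [racgToCox_gen, coxToRacg_simple])
    (by
      apply PresentedGroup.ext
      intro x
      show racgToCox Γ (coxToRacg Γ ((racgMatrix Γ).simple x)) = (racgMatrix Γ).simple x
      rw [coxToRacg_simple, racgToCox_gen])

noncomputable def racgCS : CoxeterSystem (racgMatrix Γ) (RACG Γ) := ⟨racgCoxEquiv Γ⟩

@[simp] theorem racgCS_simple (i : V) : (racgCS Γ).simple i = RACG.gen Γ i := by
  simp [CoxeterSystem.simple, racgCS, racgCoxEquiv, CoxeterMatrix.simple]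
  rfl

theorem wordProd_eq (ω : List V) :
    (racgCS Γ).wordProd ω = (ω.map (RACG.gen Γ)).prod := by
  unfold CoxeterSystem.wordProd
  exact congrArg List.prod (List.map_congr_left (fun i _ => racgCS_simple Γ i))

theorem mlen_eq_length (x : RACG Γ) :
    mlen (RACG.gen Γ) x = (racgCS Γ).length x := by
  set cs := racgCS Γ
  apply le_antisymm
  · obtain ⟨ω, hlen, hprod⟩ := cs.exists_reduced_word x
    apply Nat.sInf_le
    exact ⟨ω, by rw [← wordProd_eq, ← hprod], by rw [hprod]; exact hlen.symm⟩
  · apply le_csInf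
    · obtain ⟨ω, hlen, hprod⟩ := cs.exists_reduced_word x
      exact ⟨ω.length, ω, by rw [← wordProd_eq, ← hprod], rfl⟩
    · rintro n ⟨w, hprod, rfl⟩
      rw [← wordProd_eq] at hprod
      rw [← hprod]
      exact cs.length_wordProd_le w

theorem mtype_eq_descents (x : RACG Γ) :
    mtype (RACG.gen Γ) x = {i | (racgCS Γ).IsRightDescent x i} := by
  ext i
  simp only [mtype, Set.mem_setOf_eq]
  constructor
  · rintro ⟨w, hprod, hlen, hlast⟩
    have hne : w ≠ [] := by
      intro h; rw [h] at hlast; simp at hlast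
    have hlasti : w.getLast hne = i := by
      have := List.getLast?_eq_getLast hne
      rw [this] at hlast
      exact Option.some_injective _ hlast
    have hw : w = w.dropLast ++ [i] := by
      conv_lhs => rw [← List.dropLast_append_getLast hne, hlasti]
    have hx : x * RACG.gen Γ i = (w.dropLast.map (RACG.gen Γ)).prod := by
      rw [← hprod]
      conv_lhs => rw [hw]
      rw [List.map_append, List.prod_append]
      simp only [List.map_cons, List.map_nil, List.prod_cons, List.prod_nil, mul_one]
      rw [mul_assoc, RACG.gen_mul_self, mul_one]
    have hle : (racgCS Γ).length (x * RACG.gen Γ i) ≤ w.dropLast.length := by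
      rw [hx, ← wordProd_eq]
      exact (racgCS Γ).length_wordProd_le _
    have hlt : w.dropLast.length < w.length := by
      rw [List.length_dropLast]
      have : 0 < w.length := List.length_pos_iff.mpr hne
      omega
    show (racgCS Γ).length (x * (racgCS Γ).simple i) < (racgCS Γ).length x
    rw [racgCS_simple]
    calc (racgCS Γ).length (x * RACG.gen Γ i) ≤ w.dropLast.length := hle
      _ < w.length := hlt
      _ = (racgCS Γ).length x := by rw [hlen, mlen_eq_length]
  · intro hdesc
    obtain ⟨ω, hlen, hprod⟩ := (racgCS Γ).exists_reduced_word (x * RACG.gen Γ i)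
    have hdesc' : (racgCS Γ).length (x * RACG.gen Γ i) < (racgCS Γ).length x := by
      have := hdesc
      unfold CoxeterSystem.IsRightDescent at this
      rwa [racgCS_simple] at this
    have h1 : (racgCS Γ).length (x * RACG.gen Γ i) + 1 = (racgCS Γ).length x := by
      have h2 := (racgCS Γ).length_mul_simple x i
      rw [racgCS_simple] at h2
      omega
    refine ⟨ω ++ [i], ?_, ?_, ?_⟩
    · rw [List.map_append, List.prod_append, ← wordProd_eq, ← hprod]
      simp only [List.map_cons, List.map_nil, List.prod_cons, List.prod_nil, mul_one]
      rw [mul_assoc, RACG.gen_mul_self, mul_one]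
    · rw [mlen_eq_length]
      simp only [List.length_append, List.length_singleton, ← hlen.eq, ← hprod]
      omega
    · simp

theorem RACG.gen_inv (i : V) : (RACG.gen Γ i)⁻¹ = RACG.gen Γ i := by
  rw [inv_eq_iff_mul_eq_one]; exact RACG.gen_mul_self Γ i

theorem RACG.gen_conj_cancel (i : V) (g : RACG Γ) :
    RACG.gen Γ i * (RACG.gen Γ i * g * RACG.gen Γ i) * RACG.gen Γ i = g := by
  have h := RACG.gen_mul_self Γ i
  calc RACG.gen Γ i * (RACG.gen Γ i * g * RACG.gen Γ i) * RACG.gen Γ i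
      = (RACG.gen Γ i * RACG.gen Γ i) * g * (RACG.gen Γ i * RACG.gen Γ i) := by group
    _ = g := by rw [h, one_mul, mul_one]

theorem RACG.gen_conj_eq_iff (i : V) (g : RACG Γ) :
    RACG.gen Γ i * g * RACG.gen Γ i = RACG.gen Γ i ↔ g = RACG.gen Γ i := by
  constructor
  · intro h
    have := congrArg (fun x => RACG.gen Γ i * x * RACG.gen Γ i) h
    rw [RACG.gen_conj_cancel] at this
    rw [this]
    calc RACG.gen Γ i * RACG.gen Γ i * RACG.gen Γ i
        = (RACG.gen Γ i * RACG.gen Γ i) * RACG.gen Γ i := by group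
      _ = RACG.gen Γ i := by rw [RACG.gen_mul_self, one_mul]
  · rintro rfl
    calc RACG.gen Γ i * RACG.gen Γ i * RACG.gen Γ i
        = (RACG.gen Γ i * RACG.gen Γ i) * RACG.gen Γ i := by group
      _ = RACG.gen Γ i := by rw [RACG.gen_mul_self, one_mul]

/-- the basic permutation used for the parity action -/
noncomputable def parityMap (i : V) : RACG Γ × Bool → RACG Γ × Bool :=
  fun p => (RACG.gen Γ i * p.1 * RACG.gen Γ i, if p.1 = RACG.gen Γ i then !p.2 else p.2)

theorem parityMap_involutive (i : V) : Function.Involutive (parityMap Γ i) := by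
  intro p
  unfold parityMap
  simp only
  refine Prod.ext ?_ ?_
  · simp only
    exact RACG.gen_conj_cancel Γ i p.1
  · simp only
    by_cases h : p.1 = RACG.gen Γ i
    · rw [if_pos h, if_pos ((RACG.gen_conj_eq_iff Γ i p.1).mpr h), Bool.not_not]
    · rw [if_neg h, if_neg (fun hc => h ((RACG.gen_conj_eq_iff Γ i p.1).mp hc))]

noncomputable def parityPerm (i : V) : Equiv.Perm (RACG Γ × Bool) :=
  (parityMap_involutive Γ i).toPerm

theorem parityPerm_apply (i : V) (p : RACG Γ × Bool) :
    parityPerm Γ i p = (RACG.gen Γ i * p.1 * RACG.gen Γ i,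
      if p.1 = RACG.gen Γ i then !p.2 else p.2) := rfl

theorem parityPerm_comm {i j : V} (h : Γ.Adj i j) :
    parityPerm Γ i * parityPerm Γ j = parityPerm Γ j * parityPerm Γ i := by
  have hc := RACG.gen_comm Γ h
  have hc' : RACG.gen Γ j * RACG.gen Γ i * RACG.gen Γ j = RACG.gen Γ i := by
    calc RACG.gen Γ j * RACG.gen Γ i * RACG.gen Γ j
        = RACG.gen Γ j * (RACG.gen Γ i * RACG.gen Γ j) := by group
      _ = RACG.gen Γ j * (RACG.gen Γ j * RACG.gen Γ i) := by rw [hc]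
      _ = (RACG.gen Γ j * RACG.gen Γ j) * RACG.gen Γ i := by group
      _ = RACG.gen Γ i := by rw [RACG.gen_mul_self, one_mul]
  have hc'' : RACG.gen Γ i * RACG.gen Γ j * RACG.gen Γ i = RACG.gen Γ j := by
    calc RACG.gen Γ i * RACG.gen Γ j * RACG.gen Γ i
        = RACG.gen Γ i * (RACG.gen Γ j * RACG.gen Γ i) := by group
      _ = RACG.gen Γ i * (RACG.gen Γ i * RACG.gen Γ j) := by rw [← hc]
      _ = (RACG.gen Γ i * RACG.gen Γ i) * RACG.gen Γ j := by group
      _ = RACG.gen Γ j := by rw [RACG.gen_mul_self, one_mul]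
  ext p
  · show (parityPerm Γ i (parityPerm Γ j p)).1 = (parityPerm Γ j (parityPerm Γ i p)).1
    simp only [parityPerm_apply]
    calc RACG.gen Γ i * (RACG.gen Γ j * p.1 * RACG.gen Γ j) * RACG.gen Γ i
        = (RACG.gen Γ i * RACG.gen Γ j) * p.1 * (RACG.gen Γ j * RACG.gen Γ i) := by group
      _ = (RACG.gen Γ j * RACG.gen Γ i) * p.1 * (RACG.gen Γ i * RACG.gen Γ j) := by
          rw [hc, ← hc]
      _ = RACG.gen Γ j * (RACG.gen Γ i * p.1 * RACG.gen Γ i) * RACG.gen Γ j := by group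
  · show (parityPerm Γ i (parityPerm Γ j p)).2 = (parityPerm Γ j (parityPerm Γ i p)).2
    simp only [parityPerm_apply]
    have e1 : (RACG.gen Γ j * p.1 * RACG.gen Γ j = RACG.gen Γ i) ↔ p.1 = RACG.gen Γ i := by
      constructor
      · intro hh
        have := congrArg (fun x => RACG.gen Γ j * x * RACG.gen Γ j) hh
        rw [RACG.gen_conj_cancel] at this
        rw [this, hc']
      · intro h1; rw [h1]; exact hc'
    have e2 : (RACG.gen Γ i * p.1 * RACG.gen Γ i = RACG.gen Γ j) ↔ p.1 = RACG.gen Γ j := by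
      constructor
      · intro hh
        have := congrArg (fun x => RACG.gen Γ i * x * RACG.gen Γ i) hh
        rw [RACG.gen_conj_cancel] at this
        rw [this, hc'']
      · intro h1; rw [h1]; exact hc''
    simp only [e1, e2]
    by_cases h1 : p.1 = RACG.gen Γ j
    · by_cases h2 : p.1 = RACG.gen Γ i
      · have hh : RACG.gen Γ j = RACG.gen Γ i := h1.symm.trans h2
        simp [h1, h2, hh]
      · have hh : ¬(RACG.gen Γ j = RACG.gen Γ i) := fun hh => h2 (h1.trans hh)
        have hh' : ¬(RACG.gen Γ i = RACG.gen Γ j) := fun x => hh x.symm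
        simp [h1, h2, hh, hh']
    · by_cases h2 : p.1 = RACG.gen Γ i
      · have hh : ¬(RACG.gen Γ i = RACG.gen Γ j) := fun hh => h1 (h2.trans hh)
        have hh' : ¬(RACG.gen Γ j = RACG.gen Γ i) := fun x => hh x.symm
        simp [h1, h2, hh, hh']
      · simp [h1, h2]

theorem parityLiftable : (racgMatrix Γ).IsLiftable (parityPerm Γ) := by
    intro i j
    by_cases hij : i = j
    · subst hij
      have : (racgMatrix Γ) i i = 1 := (racgMatrix Γ).diagonal i
      rw [this, pow_one]
      ext p
      · exact congrArg Prod.fst (parityMap_involutive Γ i p)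
      · exact congrArg Prod.snd (parityMap_involutive Γ i p)
    · by_cases hadj : Γ.Adj i j
      · rw [racgMatrix_adj Γ hadj, pow_two]
        have hsq : ∀ k, parityPerm Γ k * parityPerm Γ k = 1 := by
          intro k
          ext p
          · exact congrArg Prod.fst (parityMap_involutive Γ k p)
          · exact congrArg Prod.snd (parityMap_involutive Γ k p)
        calc parityPerm Γ i * parityPerm Γ j * (parityPerm Γ i * parityPerm Γ j)
            = parityPerm Γ i * (parityPerm Γ j * parityPerm Γ i) * parityPerm Γ j := by group
          _ = parityPerm Γ i * (parityPerm Γ i * parityPerm Γ j) * parityPerm Γ j := by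
              rw [← parityPerm_comm Γ hadj]
          _ = (parityPerm Γ i * parityPerm Γ i) * (parityPerm Γ j * parityPerm Γ j) := by group
          _ = 1 := by
              rw [show parityPerm Γ i * parityPerm Γ i = 1 from by
                    ext p
                    · exact congrArg Prod.fst (parityMap_involutive Γ i p)
                    · exact congrArg Prod.snd (parityMap_involutive Γ i p)]
              rw [show parityPerm Γ j * parityPerm Γ j = 1 from by
                    ext p
                    · exact congrArg Prod.fst (parityMap_involutive Γ j p)
                    · exact congrArg Prod.snd (parityMap_involutive Γ j p)]
              rw [one_mul]
      · have : (racgMatrix Γ) i j = 0 := by simp [racgMatrix, Matrix.of_apply, hij, hadj]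
        rw [this, pow_zero]

noncomputable def parityHom : RACG Γ →* Equiv.Perm (RACG Γ × Bool) :=
  (racgCS Γ).lift ⟨parityPerm Γ, parityLiftable Γ⟩

theorem parityHom_gen (i : V) : parityHom Γ (RACG.gen Γ i) = parityPerm Γ i := by
  have := CoxeterSystem.lift_apply_simple (racgCS Γ) (parityLiftable Γ) i
  rwa [racgCS_simple] at this

theorem parityHom_fst (w : RACG Γ) : ∀ g ε, (parityHom Γ w (g, ε)).1 = w * g * w⁻¹ := by
  induction w using CoxeterSystem.simple_induction (racgCS Γ) with
  | simple i =>
    intro g ε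
    rw [racgCS_simple, parityHom_gen]
    show RACG.gen Γ i * g * RACG.gen Γ i = RACG.gen Γ i * g * (RACG.gen Γ i)⁻¹
    rw [RACG.gen_inv]
  | one => intro g ε; simp
  | mul w w' hw hw' =>
    intro g ε
    rw [map_mul]
    show (parityHom Γ w (parityHom Γ w' (g, ε))).1 = w * w' * g * (w * w')⁻¹
    have : parityHom Γ w' (g, ε) =
        ((parityHom Γ w' (g, ε)).1, (parityHom Γ w' (g, ε)).2) := rfl
    rw [this, hw, hw']
    group

theorem parityHom_snd (w : RACG Γ) :
    ∀ g ε, (parityHom Γ w (g, ε)).2 = xor ε (parityHom Γ w (g, false)).2 := by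
  induction w using CoxeterSystem.simple_induction (racgCS Γ) with
  | simple i =>
    intro g ε
    rw [racgCS_simple, parityHom_gen]
    show (if g = RACG.gen Γ i then !ε else ε)
      = xor ε (if g = RACG.gen Γ i then !false else false)
    by_cases h : g = RACG.gen Γ i <;> simp [h]
  | one => intro g ε; simp
  | mul w w' hw hw' =>
    intro g ε
    rw [map_mul]
    show (parityHom Γ w (parityHom Γ w' (g, ε))).2
      = xor ε (parityHom Γ w (parityHom Γ w' (g, false))).2
    have e1 : parityHom Γ w' (g, ε) =
        ((parityHom Γ w' (g, false)).1, xor ε (parityHom Γ w' (g, false)).2) := by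
      refine Prod.ext ?_ (hw' g ε)
      rw [parityHom_fst, parityHom_fst]
    have e2 : parityHom Γ w' (g, false) =
        ((parityHom Γ w' (g, false)).1, (parityHom Γ w' (g, false)).2) := rfl
    rw [e1]
    conv_rhs => rw [e2]
    rw [hw _ (xor ε (parityHom Γ w' (g, false)).2), hw _ (parityHom Γ w' (g, false)).2]
    cases ε <;> cases (parityHom Γ w' (g, false)).2 <;> simp

noncomputable def NN (w t : RACG Γ) : Bool := (parityHom Γ w (t, false)).2

theorem NN_one (t : RACG Γ) : NN Γ 1 t = false := by
  unfold NN; simp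

theorem NN_gen (i : V) (t : RACG Γ) :
    NN Γ (RACG.gen Γ i) t = if t = RACG.gen Γ i then true else false := by
  unfold NN
  rw [parityHom_gen]
  show (if t = RACG.gen Γ i then !false else false) = _
  by_cases h : t = RACG.gen Γ i <;> simp [h]

theorem NN_mul (w v t : RACG Γ) : NN Γ (w * v) t = xor (NN Γ v t) (NN Γ w (v * t * v⁻¹)) := by
  unfold NN
  rw [map_mul]
  show (parityHom Γ w (parityHom Γ v (t, false))).2 = _
  have e1 : parityHom Γ v (t, false) = (v * t * v⁻¹, (parityHom Γ v (t, false)).2) := by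
    refine Prod.ext ?_ rfl
    rw [parityHom_fst]
  rw [e1, parityHom_snd]

theorem NN_mul_gen (w t : RACG Γ) (i : V) :
    NN Γ (w * RACG.gen Γ i) t
      = xor (if t = RACG.gen Γ i then true else false)
        (NN Γ w (RACG.gen Γ i * t * RACG.gen Γ i)) := by
  rw [NN_mul, NN_gen, RACG.gen_inv]

theorem length_gen (i : V) : (racgCS Γ).length (RACG.gen Γ i) = 1 := by
  rw [← racgCS_simple Γ i]; exact (racgCS Γ).length_simple i

theorem NN_lt_aux : ∀ n (w t : RACG Γ), (racgCS Γ).length w = n → NN Γ w t = true →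
    (racgCS Γ).length (w * t) < (racgCS Γ).length w := by
  intro n
  induction n using Nat.strong_induction_on with
  | _ n ih =>
    intro w t hn hN
    by_cases hw : w = 1
    · rw [hw, NN_one] at hN; exact absurd hN (by simp)
    · obtain ⟨k, hk⟩ := (racgCS Γ).exists_rightDescent_of_ne_one hw
      have hk' : (racgCS Γ).length (w * RACG.gen Γ k) < (racgCS Γ).length w := by
        have := hk; unfold CoxeterSystem.IsRightDescent at this
        rwa [racgCS_simple] at this
      have hlen' : (racgCS Γ).length (w * RACG.gen Γ k) + 1 = (racgCS Γ).length w := by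
        have h2 := (racgCS Γ).length_mul_simple w k
        rw [racgCS_simple] at h2
        omega
      have hww : w = (w * RACG.gen Γ k) * RACG.gen Γ k := by
        rw [mul_assoc, RACG.gen_mul_self, mul_one]
      by_cases ht : t = RACG.gen Γ k
      · rw [ht]; exact hk'
      · have hN' : NN Γ (w * RACG.gen Γ k) (RACG.gen Γ k * t * RACG.gen Γ k) = true := by
          have := NN_mul_gen Γ (w * RACG.gen Γ k) t k
          rw [← hww] at this
          rw [hN, if_neg ht] at this
          cases hh : NN Γ (w * RACG.gen Γ k) (RACG.gen Γ k * t * RACG.gen Γ k)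
          · rw [hh] at this; simp at this
          · rfl
        have hlt := ih ((racgCS Γ).length (w * RACG.gen Γ k)) (by omega)
          (w * RACG.gen Γ k) (RACG.gen Γ k * t * RACG.gen Γ k) rfl hN'
        have heq : (w * RACG.gen Γ k) * (RACG.gen Γ k * t * RACG.gen Γ k)
            = w * t * RACG.gen Γ k := by
          calc (w * RACG.gen Γ k) * (RACG.gen Γ k * t * RACG.gen Γ k)
              = w * (RACG.gen Γ k * RACG.gen Γ k) * t * RACG.gen Γ k := by group
            _ = w * t * RACG.gen Γ k := by rw [RACG.gen_mul_self, mul_one]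
        rw [heq] at hlt
        have : (racgCS Γ).length (w * t) ≤ (racgCS Γ).length (w * t * RACG.gen Γ k) + 1 := by
          have h3 : w * t = (w * t * RACG.gen Γ k) * RACG.gen Γ k := by
            rw [mul_assoc, RACG.gen_mul_self, mul_one]
          calc (racgCS Γ).length (w * t)
              = (racgCS Γ).length ((w * t * RACG.gen Γ k) * RACG.gen Γ k) := by rw [← h3]
            _ ≤ (racgCS Γ).length (w * t * RACG.gen Γ k)
                + (racgCS Γ).length (RACG.gen Γ k) := (racgCS Γ).length_mul_le _ _
            _ = (racgCS Γ).length (w * t * RACG.gen Γ k) + 1 := by rw [length_gen]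
        omega

theorem NN_lt {w t : RACG Γ} (hN : NN Γ w t = true) :
    (racgCS Γ).length (w * t) < (racgCS Γ).length w :=
  NN_lt_aux Γ ((racgCS Γ).length w) w t rfl hN

def IsRacgReflection (t : RACG Γ) : Prop := ∃ (u : RACG Γ) (j : V), t = u * RACG.gen Γ j * u⁻¹

theorem IsRacgReflection.mul_self {t : RACG Γ} (h : IsRacgReflection Γ t) : t * t = 1 := by
  obtain ⟨u, j, rfl⟩ := h
  calc u * RACG.gen Γ j * u⁻¹ * (u * RACG.gen Γ j * u⁻¹)
      = u * (RACG.gen Γ j * RACG.gen Γ j) * u⁻¹ := by group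
    _ = 1 := by rw [RACG.gen_mul_self, mul_one, mul_inv_cancel]

theorem NN_refl_self {t : RACG Γ} (h : IsRacgReflection Γ t) : NN Γ t t = true := by
  obtain ⟨u, j, rfl⟩ := h
  set t := u * RACG.gen Γ j * u⁻¹ with hts
  have h1 : NN Γ u⁻¹ t = NN Γ u (RACG.gen Γ j) := by
    have h0 := NN_mul Γ u⁻¹ u (RACG.gen Γ j)
    rw [inv_mul_cancel, NN_one] at h0
    rw [hts]
    cases ha : NN Γ u (RACG.gen Γ j) <;> cases hb : NN Γ u⁻¹ (u * RACG.gen Γ j * u⁻¹) <;>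
      rw [ha, hb] at h0 <;> simp_all
  have h2 : u⁻¹ * t * (u⁻¹)⁻¹ = RACG.gen Γ j := by rw [hts]; group
  have h3 : NN Γ (u * RACG.gen Γ j) (RACG.gen Γ j) = xor true (NN Γ u (RACG.gen Γ j)) := by
    rw [NN_mul Γ u (RACG.gen Γ j) (RACG.gen Γ j)]
    have e : RACG.gen Γ j * RACG.gen Γ j * (RACG.gen Γ j)⁻¹ = RACG.gen Γ j := by
      rw [RACG.gen_mul_self, one_mul, RACG.gen_inv]
    rw [e, NN_gen]
    cases NN Γ u (RACG.gen Γ j) <;> simp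
  have h4 : t = (u * RACG.gen Γ j) * u⁻¹ := by rw [hts]
  calc NN Γ t t = NN Γ ((u * RACG.gen Γ j) * u⁻¹) t := by rw [← h4]
    _ = xor (NN Γ u⁻¹ t) (NN Γ (u * RACG.gen Γ j) (u⁻¹ * t * (u⁻¹)⁻¹)) := NN_mul Γ _ _ _
    _ = xor (NN Γ u (RACG.gen Γ j)) (xor true (NN Γ u (RACG.gen Γ j))) := by
        rw [h1, h2, h3]
    _ = true := by cases NN Γ u (RACG.gen Γ j) <;> simp

theorem NN_of_lt {w t : RACG Γ} (h : IsRacgReflection Γ t)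
    (hlt : (racgCS Γ).length (w * t) < (racgCS Γ).length w) : NN Γ w t = true := by
  by_contra hN
  have hN' : NN Γ w t = false := by cases hh : NN Γ w t; rfl; exact absurd hh hN
  have hinv : t⁻¹ = t := by rw [inv_eq_iff_mul_eq_one]; exact h.mul_self
  have hww : w = (w * t) * t := by rw [mul_assoc, h.mul_self, mul_one]
  have h0 := NN_mul Γ (w * t) t t
  rw [← hww] at h0
  have e : t * t * t⁻¹ = t := by rw [h.mul_self, one_mul, hinv]
  rw [e, NN_refl_self Γ h, hN'] at h0
  have h1 : NN Γ (w * t) t = true := by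
    cases hh : NN Γ (w * t) t
    · rw [hh] at h0; simp at h0
    · rfl
  have := NN_lt Γ h1
  rw [mul_assoc, h.mul_self, mul_one] at this
  omega

theorem gen_isRacgReflection (i : V) : IsRacgReflection Γ (RACG.gen Γ i) :=
  ⟨1, i, by group⟩

theorem descent_iff_NN (w : RACG Γ) (i : V) :
    (racgCS Γ).IsRightDescent w i ↔ NN Γ w (RACG.gen Γ i) = true := by
  constructor
  · intro h
    unfold CoxeterSystem.IsRightDescent at h
    rw [racgCS_simple] at h
    exact NN_of_lt Γ (gen_isRacgReflection Γ i) h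
  · intro h
    unfold CoxeterSystem.IsRightDescent
    rw [racgCS_simple]
    exact NN_lt Γ h

theorem NN_wordProd_count (ω : List V) (t : RACG Γ) :
    NN Γ ((racgCS Γ).wordProd ω) t
      = decide (Odd (List.count t ((racgCS Γ).rightInvSeq ω))) := by
  induction ω using List.reverseRecOn generalizing t with
  | nil => simp [NN_one]
  | append_singleton ω i ih =>
    have hconc : ω ++ [i] = ω.concat i := by simp
    rw [hconc, (racgCS Γ).rightInvSeq_concat ω i]
    have hπ : (racgCS Γ).wordProd (ω.concat i)
        = (racgCS Γ).wordProd ω * RACG.gen Γ i := by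
      rw [(racgCS Γ).wordProd_concat, racgCS_simple]
    rw [hπ, NN_mul_gen]
    have hinj : Function.Injective (MulAut.conj ((racgCS Γ).simple i)) :=
      (MulAut.conj _).injective
    have hmapcount : List.count t
        (List.map (⇑(MulAut.conj ((racgCS Γ).simple i))) ((racgCS Γ).rightInvSeq ω))
        = List.count (RACG.gen Γ i * t * RACG.gen Γ i) ((racgCS Γ).rightInvSeq ω) := by
      have ht : t = MulAut.conj ((racgCS Γ).simple i) (RACG.gen Γ i * t * RACG.gen Γ i) := by
        simp only [MulAut.conj_apply, racgCS_simple]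
        rw [RACG.gen_inv Γ i, RACG.gen_conj_cancel]
      conv_lhs => rw [ht]
      exact List.count_map_of_injective _ _ hinj _
    rw [List.concat_eq_append, List.count_append, hmapcount, ih]
    have hsing : List.count t [(racgCS Γ).simple i] = if t = RACG.gen Γ i then 1 else 0 := by
      rw [racgCS_simple]
      by_cases ht : t = RACG.gen Γ i
      · simp [ht]
      · rw [if_neg ht, List.count_eq_zero]
        simp [ht]
    rw [hsing]
    by_cases ht : t = RACG.gen Γ i
    · rw [if_pos ht, if_pos ht]
      cases hodd : decide (Odd (List.count (RACG.gen Γ i * t * RACG.gen Γ i)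
          ((racgCS Γ).rightInvSeq ω))) <;>
        simp_all [Nat.odd_add, Nat.even_add_one, Nat.not_even_iff_odd, parity_simps]
    · rw [if_neg ht, if_neg ht]
      cases hodd : decide (Odd (List.count (RACG.gen Γ i * t * RACG.gen Γ i)
          ((racgCS Γ).rightInvSeq ω))) <;>
        simp_all [parity_simps]

theorem strong_exchange {ω : List V} (hred : (racgCS Γ).IsReduced ω) {t : RACG Γ}
    (href : IsRacgReflection Γ t)
    (hlt : (racgCS Γ).length ((racgCS Γ).wordProd ω * t) < (racgCS Γ).length ((racgCS Γ).wordProd ω)) :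
    ∃ k < ω.length, (racgCS Γ).wordProd ω * t = (racgCS Γ).wordProd (ω.eraseIdx k) := by
  have hN : NN Γ ((racgCS Γ).wordProd ω) t = true := NN_of_lt Γ href hlt
  rw [NN_wordProd_count] at hN
  have hodd : Odd (List.count t ((racgCS Γ).rightInvSeq ω)) := of_decide_eq_true hN
  have hmem : t ∈ (racgCS Γ).rightInvSeq ω := by
    by_contra hmem
    rw [List.count_eq_zero_of_not_mem hmem] at hodd
    simp at hodd
  obtain ⟨k, hk, hkt⟩ := List.mem_iff_getElem.mp hmem
  rw [(racgCS Γ).length_rightInvSeq] at hk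
  refine ⟨k, hk, ?_⟩
  have := (racgCS Γ).wordProd_mul_getD_rightInvSeq ω k
  rw [← this]
  congr 1
  rw [List.getD_eq_getElem ((racgCS Γ).rightInvSeq ω) 1 (by rwa [(racgCS Γ).length_rightInvSeq])]
  exact hkt.symm

namespace Dihedral

noncomputable def permA : Equiv.Perm ℤ :=
  Function.Involutive.toPerm (fun x => -x) (fun x => by ring)

noncomputable def permB : Equiv.Perm ℤ :=
  Function.Involutive.toPerm (fun x => 1 - x) (fun x => by ring)

@[simp] theorem permA_apply (x : ℤ) : permA x = -x := rfl
@[simp] theorem permB_apply (x : ℤ) : permB x = 1 - x := rfl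

theorem permA_sq : permA * permA = 1 := by
  ext x; show permA (permA x) = x; simp

theorem permB_sq : permB * permB = 1 := by
  ext x; show permB (permB x) = x; simp

variable {V : Type*} (Γ : SimpleGraph V) (i j : V)

noncomputable def dmap : V → Equiv.Perm ℤ :=
  fun k => if k = i then permA else if k = j then permB else 1

theorem dmap_liftable (hij : i ≠ j) (hnadj : ¬Γ.Adj i j) :
    (racgMatrix Γ).IsLiftable (dmap i j) := by
  have hsq : ∀ k, dmap i j k * dmap i j k = 1 := by
    intro k
    unfold dmap
    split
    · exact permA_sq
    · split
      · exact permB_sq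
      · simp
  intro a b
  by_cases hab : a = b
  · subst hab
    rw [(racgMatrix Γ).diagonal a, pow_one]
    exact hsq a
  · by_cases hadj : Γ.Adj a b
    · rw [racgMatrix_adj Γ hadj, pow_two]
      -- at most one of a, b is in {i, j}
      have hone : dmap i j a = 1 ∨ dmap i j b = 1 := by
        unfold dmap
        by_cases ha1 : a = i
        · by_cases hb1 : b = i
          · exact absurd (ha1.trans hb1.symm) hab
          · by_cases hb2 : b = j
            · exact absurd (ha1 ▸ hb2 ▸ hadj) hnadj
            · right; rw [if_neg hb1, if_neg hb2]
        · by_cases ha2 : a = j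
          · by_cases hb1 : b = i
            · exfalso
              apply hnadj
              rw [← hb1, ← ha2]
              exact hadj.symm
            · by_cases hb2 : b = j
              · exact absurd (ha2.trans hb2.symm) hab
              · right; rw [if_neg hb1, if_neg hb2]
          · left; rw [if_neg ha1, if_neg ha2]
      rcases hone with h1 | h1
      · rw [h1, one_mul, hsq b]
      · rw [h1, mul_one, hsq a]
    · have : (racgMatrix Γ) a b = 0 := by simp [racgMatrix, Matrix.of_apply, hab, hadj]
      rw [this, pow_zero]

end Dihedral

section NonAdj

variable {i j : V} (hij : i ≠ j) (hnadj : ¬Γ.Adj i j)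

noncomputable def dretr : RACG Γ →* Equiv.Perm ℤ :=
  (racgCS Γ).lift ⟨Dihedral.dmap i j, Dihedral.dmap_liftable Γ i j hij hnadj⟩

theorem dretr_gen (k : V) : dretr Γ hij hnadj (RACG.gen Γ k) = Dihedral.dmap i j k := by
  have := CoxeterSystem.lift_apply_simple (racgCS Γ) (Dihedral.dmap_liftable Γ i j hij hnadj) k
  rwa [racgCS_simple] at this

/-- a norm on permutations of ℤ detecting dihedral length -/
noncomputable def dnu (g : Equiv.Perm ℤ) : ℕ :=
  if g 1 - g 0 = 1 then (g 0 + g 1 - 1).natAbs else (g 0 + g 1).natAbs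

theorem dnu_bound : ∀ ω : List V,
    (let g := dretr Γ hij hnadj ((racgCS Γ).wordProd ω);
     (g 1 - g 0 = 1 ∨ g 1 - g 0 = -1) ∧ dnu g ≤ ω.length) := by
  intro ω
  induction ω with
  | nil => simp [dnu, CoxeterSystem.wordProd_nil]
  | cons c ω ih =>
    simp only at ih ⊢
    rw [(racgCS Γ).wordProd_cons, racgCS_simple, map_mul, dretr_gen]
    set g := dretr Γ hij hnadj ((racgCS Γ).wordProd ω) with hg
    obtain ⟨hd, hb⟩ := ih
    unfold Dihedral.dmap
    have key : ∀ h : Equiv.Perm ℤ, (h = Dihedral.permA ∨ h = Dihedral.permB ∨ h = 1) →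
        ((h * g) 1 - (h * g) 0 = 1 ∨ (h * g) 1 - (h * g) 0 = -1) ∧
          dnu (h * g) ≤ ω.length + 1 := by
      intro h hh
      rcases hh with rfl | rfl | rfl
      · have e0 : (Dihedral.permA * g) 0 = -(g 0) := rfl
        have e1 : (Dihedral.permA * g) 1 = -(g 1) := rfl
        constructor
        · rw [e0, e1]; omega
        · unfold dnu at hb ⊢
          rw [e0, e1]
          split at hb <;> split <;> omega
      · have e0 : (Dihedral.permB * g) 0 = 1 - (g 0) := rfl
        have e1 : (Dihedral.permB * g) 1 = 1 - (g 1) := rfl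
        constructor
        · rw [e0, e1]; omega
        · unfold dnu at hb ⊢
          rw [e0, e1]
          split at hb <;> split <;> omega
      · rw [one_mul]
        exact ⟨hd, by omega⟩
    split
    · exact key _ (Or.inl rfl)
    · split
      · exact key _ (Or.inr (Or.inl rfl))
      · exact key _ (Or.inr (Or.inr rfl))

/-- alternating word i, j, i, j, ... of length n (starting with i) -/
def altw : ℕ → List V
  | 0 => []
  | n + 1 => altw n ++ [if n % 2 = 0 then i else j]

theorem altw_succ (n : ℕ) : altw (i := i) (j := j) (n + 1)
    = altw (i := i) (j := j) n ++ [if n % 2 = 0 then i else j] := rfl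

theorem altw_length (n : ℕ) : (altw (i := i) (j := j) n).length = n := by
  induction n with
  | zero => rfl
  | succ n ih => rw [altw_succ]; simp [ih]

theorem altw_reverse_succ (n : ℕ) :
    (altw (i := i) (j := j) (n + 1)).reverse
      = (if n % 2 = 0 then i else j) :: (altw (i := i) (j := j) n).reverse := by
  rw [altw_succ]
  simp

theorem dnu_altw (n : ℕ) :
    (let g := dretr Γ hij hnadj ((racgCS Γ).wordProd (altw (i := i) (j := j) n).reverse);
      (n % 2 = 0 → g 0 = n / 2 ∧ g 1 = n / 2 + 1) ∧
      (n % 2 = 1 → g 0 = -((n : ℤ) / 2) ∧ g 1 = -((n : ℤ) / 2) - 1)) := by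
  induction n with
  | zero =>
    simp only [altw, List.reverse_nil, CoxeterSystem.wordProd_nil, map_one]
    constructor
    · intro _; constructor <;> rfl
    · intro h; omega
  | succ n ih =>
    simp only at ih ⊢
    rw [altw_reverse_succ, (racgCS Γ).wordProd_cons, racgCS_simple, map_mul, dretr_gen]
    set g := dretr Γ hij hnadj ((racgCS Γ).wordProd (altw (i := i) (j := j) n).reverse) with hg
    obtain ⟨hev, hod⟩ := ih
    by_cases hn : n % 2 = 0
    · obtain ⟨h0, h1⟩ := hev hn
      rw [if_pos hn]
      unfold Dihedral.dmap
      rw [if_pos rfl]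
      have e0 : (Dihedral.permA * g) 0 = -(g 0) := rfl
      have e1 : (Dihedral.permA * g) 1 = -(g 1) := rfl
      constructor
      · intro h; omega
      · intro h
        rw [e0, e1, h0, h1]
        constructor
        · congr 1
          omega
        · have : ((n : ℤ) + 1) / 2 = (n : ℤ) / 2 := by omega
          rw [Nat.cast_add, Nat.cast_one, this]
          push_cast
          omega
    · have hn1 : n % 2 = 1 := by omega
      obtain ⟨h0, h1⟩ := hod hn1
      rw [if_neg hn]
      unfold Dihedral.dmap
      rw [if_neg (Ne.symm hij), if_pos rfl]
      have e0 : (Dihedral.permB * g) 0 = 1 - (g 0) := rfl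
      have e1 : (Dihedral.permB * g) 1 = 1 - (g 1) := rfl
      constructor
      · intro h
        rw [e0, e1, h0, h1]
        constructor
        · push_cast
          omega
        · push_cast
          omega
      · intro h; omega

theorem dnu_altw_val (n : ℕ) :
    dnu (dretr Γ hij hnadj ((racgCS Γ).wordProd (altw (i := i) (j := j) n).reverse)) = n := by
  have h := dnu_altw Γ hij hnadj n
  simp only at h
  obtain ⟨hev, hod⟩ := h
  set g := dretr Γ hij hnadj ((racgCS Γ).wordProd (altw (i := i) (j := j) n).reverse) with hg
  by_cases hn : n % 2 = 0
  · obtain ⟨h0, h1⟩ := hev hn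
    unfold dnu
    rw [h0, h1, if_pos (by omega)]
    omega
  · obtain ⟨h0, h1⟩ := hod (by omega)
    unfold dnu
    rw [h0, h1, if_neg (by omega)]
    omega

end NonAdj

theorem no_two_descents_nonadj {i j : V} (hij : i ≠ j) (hnadj : ¬Γ.Adj i j) {w : RACG Γ}
    (hdi : (racgCS Γ).IsRightDescent w i) (hdj : (racgCS Γ).IsRightDescent w j) : False := by
  have main : ∀ k, ∃ ρ : List V, (racgCS Γ).IsReduced (ρ ++ altw (i := i) (j := j) k) ∧
      w = (racgCS Γ).wordProd (ρ ++ altw (i := i) (j := j) k) := by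
    intro k
    induction k with
    | zero =>
      obtain ⟨ω, hred, hw⟩ := (racgCS Γ).exists_reduced_word' w
      exact ⟨ω, by simpa [altw] using hred, by simpa [altw] using hw⟩
    | succ k ih =>
      obtain ⟨ρ, hred, hw⟩ := ih
      set c := if k % 2 = 0 then i else j with hc
      have hdc : (racgCS Γ).IsRightDescent w c := by
        rw [hc]; split
        · exact hdi
        · exact hdj
      have hlt : (racgCS Γ).length
          ((racgCS Γ).wordProd (ρ ++ altw (i := i) (j := j) k) * RACG.gen Γ c)
          < (racgCS Γ).length ((racgCS Γ).wordProd (ρ ++ altw (i := i) (j := j) k)) := by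
        rw [← hw]
        have := hdc
        unfold CoxeterSystem.IsRightDescent at this
        rwa [racgCS_simple] at this
      obtain ⟨p, hp, hex⟩ := strong_exchange Γ hred (gen_isRacgReflection Γ c) hlt
      rw [List.length_append, altw_length] at hp
      by_cases hpρ : p < ρ.length
      · rw [List.eraseIdx_append_of_lt_length hpρ] at hex
        refine ⟨ρ.eraseIdx p, ?_, ?_⟩
        · unfold CoxeterSystem.IsReduced
          have hweq : (racgCS Γ).wordProd (ρ.eraseIdx p ++ altw (i := i) (j := j) (k+1)) = w := by
            rw [altw_succ, ← hc]
            rw [show ρ.eraseIdx p ++ (altw (i := i) (j := j) k ++ [c])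
                = (ρ.eraseIdx p ++ altw (i := i) (j := j) k) ++ [c] by simp]
            rw [(racgCS Γ).wordProd_append, (racgCS Γ).wordProd_append]
            simp only [CoxeterSystem.wordProd_singleton, racgCS_simple]
            rw [← (racgCS Γ).wordProd_append, ← hex, hw]
            rw [(racgCS Γ).wordProd_append]
            rw [mul_assoc, RACG.gen_mul_self, mul_one]
          rw [hweq]
          have hlenw : (racgCS Γ).length w = ρ.length + k := by
            have h2 := hred
            unfold CoxeterSystem.IsReduced at h2
            rw [← hw] at h2
            rw [h2, List.length_append, altw_length]
          rw [hlenw, List.length_append, altw_length, List.length_eraseIdx, if_pos hpρ]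
          omega
        · rw [altw_succ, ← hc]
          rw [show ρ.eraseIdx p ++ (altw (i := i) (j := j) k ++ [c])
              = (ρ.eraseIdx p ++ altw (i := i) (j := j) k) ++ [c] by simp]
          rw [(racgCS Γ).wordProd_append, CoxeterSystem.wordProd_singleton, racgCS_simple]
          rw [← hex, hw]
          rw [mul_assoc, RACG.gen_mul_self, mul_one]
      · exfalso
        push_neg at hpρ
        rw [List.eraseIdx_append_of_length_le hpρ] at hex
        set q := p - ρ.length with hq
        have hqk : q < k := by omega
        have heq : (racgCS Γ).wordProd (altw (i := i) (j := j) k) * RACG.gen Γ c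
            = (racgCS Γ).wordProd ((altw (i := i) (j := j) k).eraseIdx q) := by
          rw [(racgCS Γ).wordProd_append, (racgCS Γ).wordProd_append] at hex
          rw [mul_assoc] at hex
          exact mul_left_cancel hex
        have heq2 : (racgCS Γ).wordProd (altw (i := i) (j := j) (k+1))
            = (racgCS Γ).wordProd ((altw (i := i) (j := j) k).eraseIdx q) := by
          rw [altw_succ, ← hc, (racgCS Γ).wordProd_append, CoxeterSystem.wordProd_singleton,
            racgCS_simple]
          exact heq
        have hval : dnu (dretr Γ hij hnadj
            (((racgCS Γ).wordProd (altw (i := i) (j := j) (k+1)))⁻¹)) = k + 1 := by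
          rw [← (racgCS Γ).wordProd_reverse]
          exact dnu_altw_val Γ hij hnadj (k+1)
        have hbd : dnu (dretr Γ hij hnadj
            (((racgCS Γ).wordProd ((altw (i := i) (j := j) k).eraseIdx q))⁻¹)) ≤ k - 1 := by
          rw [← (racgCS Γ).wordProd_reverse]
          have := (dnu_bound Γ hij hnadj ((altw (i := i) (j := j) k).eraseIdx q).reverse).2
          rw [List.length_reverse, List.length_eraseIdx] at this
          simp only [altw_length] at this
          rw [if_pos hqk] at this
          exact this
        rw [heq2] at hval
        rw [hval] at hbd
        omega
  obtain ⟨ρ, hred, hw⟩ := main ((racgCS Γ).length w + 1)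
  have h1 : (racgCS Γ).length w = ρ.length + ((racgCS Γ).length w + 1) := by
    have h2 := hred
    unfold CoxeterSystem.IsReduced at h2
    rw [← hw] at h2
    rw [List.length_append, altw_length] at h2
    exact h2
  omega

theorem zmod2_mul_sq (u v : Multiplicative (ZMod 2)) : (u * v) ^ 2 = 1 := by
  revert u v; decide

theorem gen_ne_gen {i j : V} (hij : i ≠ j) : RACG.gen Γ i ≠ RACG.gen Γ j := by
  have hlift : (racgMatrix Γ).IsLiftable
      (fun k => if k = i then Multiplicative.ofAdd (1 : ZMod 2) else 1) := by
    intro a b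
    by_cases hab : a = b
    · subst hab
      rw [(racgMatrix Γ).diagonal a, pow_one]
      show (if a = i then Multiplicative.ofAdd (1 : ZMod 2) else 1)
        * (if a = i then Multiplicative.ofAdd (1 : ZMod 2) else 1) = 1
      by_cases ha : a = i
      · rw [if_pos ha]; decide
      · rw [if_neg ha, one_mul]
    · have : (racgMatrix Γ) a b = 2 ∨ (racgMatrix Γ) a b = 0 := by
        by_cases hadj : Γ.Adj a b
        · left; exact racgMatrix_adj Γ hadj
        · right; simp [racgMatrix, Matrix.of_apply, hab, hadj]
      rcases this with h | h
      · rw [h]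
        exact zmod2_mul_sq _ _
      · rw [h, pow_zero]
  intro hgen
  have h1 := CoxeterSystem.lift_apply_simple (racgCS Γ) hlift i
  have h2 := CoxeterSystem.lift_apply_simple (racgCS Γ) hlift j
  rw [racgCS_simple] at h1 h2
  rw [hgen] at h1
  rw [h1, if_pos rfl, if_neg (fun h => hij h.symm)] at h2
  exact (by decide : Multiplicative.ofAdd (1 : ZMod 2) ≠ 1) h2

theorem gen_conj_gen {i j : V} (hadj : Γ.Adj i j) :
    RACG.gen Γ i * RACG.gen Γ j * RACG.gen Γ i = RACG.gen Γ j := by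
  have hc := RACG.gen_comm Γ hadj
  calc RACG.gen Γ i * RACG.gen Γ j * RACG.gen Γ i
      = RACG.gen Γ i * (RACG.gen Γ j * RACG.gen Γ i) := by group
    _ = RACG.gen Γ i * (RACG.gen Γ i * RACG.gen Γ j) := by rw [← hc]
    _ = (RACG.gen Γ i * RACG.gen Γ i) * RACG.gen Γ j := by group
    _ = RACG.gen Γ j := by rw [RACG.gen_mul_self, one_mul]

theorem key_descents {x' : RACG Γ} {i : V} (hasc : ¬(racgCS Γ).IsRightDescent x' i) (j : V) :
    (racgCS Γ).IsRightDescent (x' * RACG.gen Γ i) j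
      ↔ (j = i ∨ ((racgCS Γ).IsRightDescent x' j ∧ Γ.Adj i j)) := by
  have hxx' : (x' * RACG.gen Γ i) * RACG.gen Γ i = x' := by
    rw [mul_assoc, RACG.gen_mul_self, mul_one]
  have hlen : (racgCS Γ).length (x' * RACG.gen Γ i) = (racgCS Γ).length x' + 1 := by
    have h2 := (racgCS Γ).length_mul_simple x' i
    rw [racgCS_simple] at h2
    unfold CoxeterSystem.IsRightDescent at hasc
    rw [racgCS_simple] at hasc
    omega
  have hdes_i : (racgCS Γ).IsRightDescent (x' * RACG.gen Γ i) i := by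
    show (racgCS Γ).length ((x' * RACG.gen Γ i) * (racgCS Γ).simple i)
      < (racgCS Γ).length (x' * RACG.gen Γ i)
    rw [racgCS_simple Γ i, hxx', hlen]
    omega
  constructor
  · intro hdj
    by_cases hji : j = i
    · exact Or.inl hji
    · have hadj : Γ.Adj i j := by
        by_contra hnadj
        exact no_two_descents_nonadj Γ (fun h => hji h.symm) hnadj hdes_i hdj
      refine Or.inr ⟨?_, hadj⟩
      rw [descent_iff_NN] at hdj ⊢
      have hcomp := NN_mul_gen Γ x' (RACG.gen Γ j) i
      rw [if_neg (gen_ne_gen Γ hji), gen_conj_gen Γ hadj] at hcomp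
      rw [hdj] at hcomp
      cases hh : NN Γ x' (RACG.gen Γ j)
      · rw [hh] at hcomp; simp at hcomp
      · rfl
  · rintro (rfl | ⟨hdj, hadj⟩)
    · exact hdes_i
    · have hji : j ≠ i := fun h => (Γ.ne_of_adj hadj) h.symm
      rw [descent_iff_NN] at hdj ⊢
      have hcomp := NN_mul_gen Γ x' (RACG.gen Γ j) i
      rw [if_neg (gen_ne_gen Γ hji), gen_conj_gen Γ hadj, hdj] at hcomp
      simpa using hcomp

theorem racg_children (m : ℕ) (Γ : SimpleGraph (Fin m)) (C' : Set (Fin m))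
    (hC' : Γ.IsClique C') (x' : RACG Γ) (hx' : mtype (RACG.gen Γ) x' = C') :
    (∀ C : Set (Fin m), Branch Γ C' C →
      ∃! x : RACG Γ,
        (∃ i : Fin m, x = x' * RACG.gen Γ i ∧
          mlen (RACG.gen Γ) x = mlen (RACG.gen Γ) x' + 1 ∧
          IsGreatest (mtype (RACG.gen Γ) x) i) ∧
        mtype (RACG.gen Γ) x = C) ∧
    (∀ x : RACG Γ,
      (∃ i : Fin m, x = x' * RACG.gen Γ i ∧
        mlen (RACG.gen Γ) x = mlen (RACG.gen Γ) x' + 1 ∧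
        IsGreatest (mtype (RACG.gen Γ) x) i) →
      Branch Γ C' (mtype (RACG.gen Γ) x)) := by
  have hmem : ∀ j, (racgCS Γ).IsRightDescent x' j ↔ j ∈ C' := by
    intro j
    rw [← hx', mtype_eq_descents]
    rfl
  -- basic length fact for ascents
  have hasc_len : ∀ i : Fin m, ¬(racgCS Γ).IsRightDescent x' i →
      mlen (RACG.gen Γ) (x' * RACG.gen Γ i) = mlen (RACG.gen Γ) x' + 1 := by
    intro i hasc
    rw [mlen_eq_length, mlen_eq_length]
    have h2 := (racgCS Γ).length_mul_simple x' i
    rw [racgCS_simple] at h2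
    unfold CoxeterSystem.IsRightDescent at hasc
    rw [racgCS_simple] at hasc
    omega
  have hlen_asc : ∀ i : Fin m, mlen (RACG.gen Γ) (x' * RACG.gen Γ i) = mlen (RACG.gen Γ) x' + 1 →
      ¬(racgCS Γ).IsRightDescent x' i := by
    intro i hlen hdes
    rw [mlen_eq_length, mlen_eq_length] at hlen
    unfold CoxeterSystem.IsRightDescent at hdes
    rw [racgCS_simple] at hdes
    omega
  have hmtype : ∀ (i : Fin m), ¬(racgCS Γ).IsRightDescent x' i →
      mtype (RACG.gen Γ) (x' * RACG.gen Γ i) = insert i {j ∈ C' | Γ.Adj i j} := by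
    intro i hasc
    rw [mtype_eq_descents]
    ext j
    rw [Set.mem_setOf_eq, key_descents Γ hasc j]
    simp only [Set.mem_insert_iff, Set.mem_setOf_eq, hmem j]
  constructor
  · rintro C ⟨i, hiC', hCeq, hmax⟩
    have hasc : ¬(racgCS Γ).IsRightDescent x' i := fun h => hiC' ((hmem i).mp h)
    have hiC : i ∈ C := by rw [hCeq]; exact Set.mem_insert _ _
    have higreatest : IsGreatest C i := by
      refine ⟨hiC, ?_⟩
      intro j hj
      by_cases hji : j = i
      · exact le_of_eq hji
      · exact le_of_lt (hmax j hj hji)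
    have htypeeq : mtype (RACG.gen Γ) (x' * RACG.gen Γ i) = C := by
      rw [hmtype i hasc, hCeq]
    refine ⟨x' * RACG.gen Γ i, ⟨⟨i, rfl, hasc_len i hasc, ?_⟩, htypeeq⟩, ?_⟩
    · rw [htypeeq]; exact higreatest
    · rintro y ⟨⟨i', rfl, hylen, hygreat⟩, hytype⟩
      have : i' = i := by
        rw [hytype] at hygreat
        exact hygreat.unique higreatest
      rw [this]
  · rintro x ⟨i, rfl, hlen, hgreat⟩
    have hasc : ¬(racgCS Γ).IsRightDescent x' i := hlen_asc i hlen
    refine ⟨i, fun h => hasc ((hmem i).mpr h), hmtype i hasc, ?_⟩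
    intro j hj hji
    exact lt_of_le_of_ne (hgreat.2 hj) hji
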